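/- arXiv:1206.1838 — 2 statements merged into one kernel-verified Lean document; each statement's English description precedes it below -/
import Mathlib

section
/- Along any C¹ trajectory of the sliding-augmented system ẋ = P(x)f(x,t) - Σⱼ cⱼ hⱼ(x)∇hⱼ(x) (with cⱼ > 0), the function s(x) = ½ Σᵢ cᵢ hᵢ(x)² satisfies ds/dt = -‖Σᵢ cᵢ hᵢ(x)∇hᵢ(x)‖² ≤ 0. -/
open scoped RealInnerProductSpace

/-- Along any C¹ trajectory of the sliding-augmented system
`ẋ = P(x)f(x,t) - Σⱼ cⱼ hⱼ(x) ∇hⱼ(x)` (with `cⱼ > 0`, and `P(x)f ∈ ker ∇h(x)`,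
i.e. the projected part is orthogonal to every `∇hᵢ(x)`), the sliding variable
`s = ½ Σᵢ cᵢ hᵢ(x)²` satisfies `ds/dt = -‖Σᵢ cᵢ hᵢ(x) ∇hᵢ(x)‖² ≤ 0`. -/
theorem sliding_variable_decreases {n m : ℕ}
    (h : Fin m → EuclideanSpace ℝ (Fin n) → ℝ)
    (gh : Fin m → EuclideanSpace ℝ (Fin n) → EuclideanSpace ℝ (Fin n))
    (hgrad : ∀ i p, HasGradientAt (h i) (gh i p) p)
    (c : Fin m → ℝ) (hc : ∀ i, 0 < c i)
    (x : ℝ → EuclideanSpace ℝ (Fin n))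
    (Pf : ℝ → EuclideanSpace ℝ (Fin n))
    (htan : ∀ t i, ⟪gh i (x t), Pf t⟫ = 0)
    (hx : ∀ t, HasDerivAt x (Pf t - ∑ j, c j • h j (x t) • gh j (x t)) t) :
    ∀ t : ℝ,
      HasDerivAt (fun τ => (1 / 2 : ℝ) * ∑ i, c i * (h i (x τ)) ^ 2)
        (-‖∑ i, c i • h i (x t) • gh i (x t)‖ ^ 2) t ∧
      -‖∑ i, c i • h i (x t) • gh i (x t)‖ ^ 2 ≤ 0 := by
  intro t
  set v : EuclideanSpace ℝ (Fin n) := ∑ j, c j • h j (x t) • gh j (x t) with hv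
  set d : EuclideanSpace ℝ (Fin n) := Pf t - v with hd
  have hhi : ∀ i : Fin m, HasDerivAt (fun τ => h i (x τ)) ⟪gh i (x t), d⟫ t := by
    intro i
    have := ((hgrad i (x t)).hasFDerivAt).comp_hasDerivAt t (hx t)
    simp at this
    exact this
  have hterm : ∀ i : Fin m, HasDerivAt (fun τ => c i * (h i (x τ)) ^ 2)
      (c i * (2 * h i (x t) * ⟪gh i (x t), d⟫)) t := by
    intro i
    have := ((hhi i).pow 2).const_mul (c i)
    simpa [mul_comm, mul_assoc, mul_left_comm] using this
  have hsum : HasDerivAt (fun τ => ∑ i, c i * (h i (x τ)) ^ 2)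
      (∑ i, c i * (2 * h i (x t) * ⟪gh i (x t), d⟫)) t :=
    HasDerivAt.fun_sum fun i _ => hterm i
  have hmain : HasDerivAt (fun τ => (1 / 2 : ℝ) * ∑ i, c i * (h i (x τ)) ^ 2)
      ((1 / 2 : ℝ) * ∑ i, c i * (2 * h i (x t) * ⟪gh i (x t), d⟫)) t :=
    hsum.const_mul _
  have hkey : (1 / 2 : ℝ) * ∑ i, c i * (2 * h i (x t) * ⟪gh i (x t), d⟫) = -‖v‖ ^ 2 := by
    have h1 : (1 / 2 : ℝ) * ∑ i, c i * (2 * h i (x t) * ⟪gh i (x t), d⟫) = ⟪v, d⟫ := by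
      rw [hv, sum_inner]
      rw [Finset.mul_sum]
      congr 1; ext i
      rw [real_inner_smul_left, real_inner_smul_left]
      ring
    have h2 : ⟪v, d⟫ = -‖v‖ ^ 2 := by
      rw [hd, inner_sub_right]
      have h3 : ⟪v, Pf t⟫ = 0 := by
        rw [hv, sum_inner]
        refine Finset.sum_eq_zero fun i _ => ?_
        rw [real_inner_smul_left, real_inner_smul_left, htan t i]
        ring
      rw [h3, real_inner_self_eq_norm_sq]
      ring
    rw [h1, h2]
  refine ⟨hkey ▸ hmain, ?_⟩
  simp only [neg_nonpos]; exact sq_nonneg ‖v‖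
end

section
/- For a single constraint h : ℝⁿ → ℝ with ‖∇h(x)‖² ≥ k > 0 along the trajectory, any solution of ẋ = P(x)f(x,t) - c·h(x)∇h(x) with c > 0 satisfies h(x(t))² ≤ h(x(0))² e^{-2ckt}; i.e., exponential convergence to the constraint surface. -/
open scoped RealInnerProductSpace

/-- For a single constraint `h` with `‖∇h(x(t))‖² ≥ k > 0` along the trajectory,
any solution of `ẋ = P(x)f(x,t) - c h(x) ∇h(x)` with `c > 0` satisfies
`h(x(t))² ≤ h(x(0))² e^{-2ckt}`: exponential convergence to the constraint surface. -/
theorem sliding_exponential_convergence {n : ℕ}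
    (h : EuclideanSpace ℝ (Fin n) → ℝ)
    (gh : EuclideanSpace ℝ (Fin n) → EuclideanSpace ℝ (Fin n))
    (hgrad : ∀ p, HasGradientAt h (gh p) p)
    (c k : ℝ) (hc : 0 < c) (hk : 0 < k)
    (x : ℝ → EuclideanSpace ℝ (Fin n))
    (Pf : ℝ → EuclideanSpace ℝ (Fin n))
    (htan : ∀ t, ⟪gh (x t), Pf t⟫ = 0)
    (hx : ∀ t, HasDerivAt x (Pf t - (c * h (x t)) • gh (x t)) t)
    (hbound : ∀ t, k ≤ ‖gh (x t)‖ ^ 2) :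
    ∀ t ≥ (0 : ℝ), (h (x t)) ^ 2 ≤ (h (x 0)) ^ 2 * Real.exp (-2 * c * k * t) := by
  -- derivative of h ∘ x
  have hV : ∀ t, HasDerivAt (fun t => (h (x t)) ^ 2)
      (-2 * c * (h (x t)) ^ 2 * ‖gh (x t)‖ ^ 2) t := by
    intro t
    have h1 : HasDerivAt (fun t => h (x t))
        (⟪gh (x t), Pf t - (c * h (x t)) • gh (x t)⟫) t := by
      have := (hgrad (x t)).hasFDerivAt.comp_hasDerivAt t (hx t)
      simpa [InnerProductSpace.toDual_apply_apply, Function.comp_def] using this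
    have h2 := h1.fun_pow 2
    refine h2.congr_deriv ?_
    rw [inner_sub_right, inner_smul_right, htan, real_inner_self_eq_norm_sq]
    ring
  have hg : ∀ t, HasDerivAt (fun t => (h (x t)) ^ 2 * Real.exp (2 * c * k * t))
      ((-2 * c * (h (x t)) ^ 2 * ‖gh (x t)‖ ^ 2) * Real.exp (2 * c * k * t)
        + (h (x t)) ^ 2 * ((2 * c * k) * Real.exp (2 * c * k * t))) t := by
    intro t
    have he : HasDerivAt (fun t : ℝ => Real.exp (2 * c * k * t))
        ((2 * c * k) * Real.exp (2 * c * k * t)) t := by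
      have := (Real.hasDerivAt_exp (2 * c * k * t)).comp t
        ((hasDerivAt_id t).const_mul (2 * c * k))
      simpa [Function.comp_def, mul_comm] using this
    exact (hV t).mul he
  have hdiff : Differentiable ℝ (fun t => (h (x t)) ^ 2 * Real.exp (2 * c * k * t)) :=
    fun t => (hg t).differentiableAt
  have hanti : Antitone (fun t => (h (x t)) ^ 2 * Real.exp (2 * c * k * t)) := by
    apply antitone_of_deriv_nonpos hdiff
    intro t
    rw [(hg t).deriv]
    have hb := hbound t
    have hexp : 0 < Real.exp (2 * c * k * t) := Real.exp_pos _
    have hsq : (0:ℝ) ≤ (h (x t)) ^ 2 := sq_nonneg _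
    nlinarith [mul_nonneg (mul_nonneg (mul_nonneg hc.le hsq) (sub_nonneg.mpr hb)) hexp.le]
  intro t ht
  have := hanti ht
  simp only at this
  have hexp : 0 < Real.exp (2 * c * k * t) := Real.exp_pos _
  rw [show (-2 : ℝ) * c * k * t = -(2 * c * k * t) by ring, Real.exp_neg]
  have h0 : h (x t) ^ 2 * Real.exp (2 * c * k * t) ≤ h (x 0) ^ 2 := by
    simpa using this
  calc h (x t) ^ 2
      = (h (x t) ^ 2 * Real.exp (2 * c * k * t)) * (Real.exp (2 * c * k * t))⁻¹ := by
        field_simp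
    _ ≤ h (x 0) ^ 2 * (Real.exp (2 * c * k * t))⁻¹ := by
        gcongr
end
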